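/- Let p ≥ 2 and set a = √(p²−p+1)/(2√(p−1)). Define r : {(ξ,y) : ξ ≠ 0} → ℝ³ by r₁ = (1/√(3(p−1)))·(√(p²−p+1)·coth(a ξ) + 1)·e^{−ξ/(2√(p−1)) + (2p−1)y/(2√(3(p−1)))}, r₂ = (1/√(3(p−1)))·(√(p²−p+1)·coth(a ξ) + (p−1))·e^{−(√(p−1)/2)ξ − (p+1)y/(2√(3(p−1)))}, r₃ = −(1/(√3 p))·(√(p²−p+1)·coth(a ξ) − p)·e^{(p/(2√(p−1)))ξ − (p−2)y/(2√(3(p−1)))}. Then each component satisfies ∂²r/∂ξ² + ∂²r/∂y² = ((p²−p+1)/(2(p−1)))·(coth²(a ξ) − 1/3)·r for all ξ ≠ 0, y ∈ ℝ. -/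

import Mathlib

/-- Real hyperbolic cotangent. -/
noncomputable def coth (x : ℝ) : ℝ := Real.cosh x / Real.sinh x

lemma hasDerivAt_coth {x : ℝ} (hx : x ≠ 0) : HasDerivAt coth (1 - coth x ^ 2) x := by
  have hs : Real.sinh x ≠ 0 := by simpa [Real.sinh_eq_zero] using hx
  have h : HasDerivAt (fun x => Real.cosh x / Real.sinh x) _ x :=
    (Real.hasDerivAt_cosh x).div (Real.hasDerivAt_sinh x) hs
  convert h using 1
  have hc := Real.cosh_sq_sub_sinh_sq x
  show 1 - (Real.cosh x / Real.sinh x) ^ 2 = _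
  rw [div_pow, one_sub_div (pow_ne_zero 2 hs)]
  congr 1
  ring
  rfl

lemma hasDerivAt_coth_comp (a : ℝ) {s : ℝ} (h : a * s ≠ 0) :
    HasDerivAt (fun s => coth (a * s)) ((1 - coth (a * s) ^ 2) * a) s := by
  have h0 : HasDerivAt (fun s : ℝ => a * s) a s := by
    simpa using (hasDerivAt_id s).const_mul a
  exact (hasDerivAt_coth h).comp s h0

lemma key (a C K b α β : ℝ) (ha : a ≠ 0) (h1 : K * α = -(a * b))
    (h2 : α ^ 2 + β ^ 2 = 4 * a ^ 2 / 3) (ξ : ℝ) (hξ : ξ ≠ 0) (y : ℝ) :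
    deriv (deriv fun s => C * (K * coth (a * s) + b) * Real.exp (α * s + β * y)) ξ
      + deriv (deriv fun s => C * (K * coth (a * ξ) + b) * Real.exp (α * ξ + β * s)) y
    = 2 * a ^ 2 * (coth (a * ξ) ^ 2 - 1 / 3)
        * (C * (K * coth (a * ξ) + b) * Real.exp (α * ξ + β * y)) := by
  have hE : ∀ s : ℝ, HasDerivAt (fun s => Real.exp (α * s + β * y))
      (Real.exp (α * s + β * y) * α) s := by
    intro s
    have h0 : HasDerivAt (fun s : ℝ => α * s + β * y) α s := by
      simpa using ((hasDerivAt_id s).const_mul α).add_const (β * y)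
    exact h0.exp
  have hU : ∀ s : ℝ, s ≠ 0 → HasDerivAt (fun s => C * (K * coth (a * s) + b))
      (C * (K * ((1 - coth (a * s) ^ 2) * a))) s := fun s hs =>
    (((hasDerivAt_coth_comp a (mul_ne_zero ha hs)).const_mul K).add_const b).const_mul C
  have hev : (deriv fun s => C * (K * coth (a * s) + b) * Real.exp (α * s + β * y)) =ᶠ[nhds ξ]
      (fun s => (1 - coth (a * s) ^ 2) * (C * K * a) * Real.exp (α * s + β * y)
          + C * (K * coth (a * s) + b) * Real.exp (α * s + β * y) * α) := by
    filter_upwards [eventually_ne_nhds hξ] with s hs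
    have hd : HasDerivAt
      (fun s => C * (K * coth (a * s) + b) * Real.exp (α * s + β * y)) _ s := (hU s hs).mul (hE s)
    rw [hd.deriv]
    ring
  rw [hev.deriv_eq]
  set u := coth (a * ξ) with hu
  have haξ : a * ξ ≠ 0 := mul_ne_zero ha hξ
  have hc1 : HasDerivAt (fun s => coth (a * s)) ((1 - u ^ 2) * a) ξ := hasDerivAt_coth_comp a haξ
  have hsq : HasDerivAt (fun s => 1 - coth (a * s) ^ 2)
      (-(2 * u ^ 1 * ((1 - u ^ 2) * a))) ξ := by
    simpa using (hc1.pow 2).const_sub 1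
  have t1 := (hsq.mul_const (C * K * a)).mul (hE ξ)
  have t2 := (((hU ξ hξ).mul (hE ξ)).mul_const α)
  have t12 : HasDerivAt (fun s =>
      (1 - coth (a * s) ^ 2) * (C * K * a) * Real.exp (α * s + β * y)
        + C * (K * coth (a * s) + b) * Real.exp (α * s + β * y) * α) _ ξ := t1.add t2
  rw [t12.deriv]
  have hE2 : ∀ t : ℝ, HasDerivAt (fun s => C * (K * u + b) * Real.exp (α * ξ + β * s))
      (C * (K * u + b) * (Real.exp (α * ξ + β * t) * β)) t := by
    intro t
    have h0 : HasDerivAt (fun s : ℝ => α * ξ + β * s) β t := by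
      simpa using ((hasDerivAt_id t).const_mul β).const_add (α * ξ)
    exact (h0.exp).const_mul (C * (K * u + b))
  have hdy : (deriv fun s => C * (K * u + b) * Real.exp (α * ξ + β * s))
      = fun t => (C * (K * u + b) * β) * Real.exp (α * ξ + β * t) := by
    funext t
    rw [(hE2 t).deriv]; ring
  rw [hdy]
  have hE3 : HasDerivAt (fun t => (C * (K * u + b) * β) * Real.exp (α * ξ + β * t))
      ((C * (K * u + b) * β) * (Real.exp (α * ξ + β * y) * β)) y := by
    have h0 : HasDerivAt (fun s : ℝ => α * ξ + β * s) β y := by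
      simpa using ((hasDerivAt_id y).const_mul β).const_add (α * ξ)
    exact (h0.exp).const_mul _
  rw [hE3.deriv]
  linear_combination (C * Real.exp (α * ξ + β * y) * (2 * a - 2 * a * u ^ 2)) * h1
    + (C * Real.exp (α * ξ + β * y) * (K * u + b)) * h2

/-- The isothermal parametrization (case `c = −2(p+q)`, `s = 1`) of the complete
hyperbolic affine sphere asymptotic to the cone
`{x : 0 ≤ x₂ ≤ x₁^{1/p} x₃^{1/q}}` (case 5 of Hildebrand's classification);
here `a = √(p²−p+1)/(2√(p−1))`. -/
noncomputable def r (p a ξ y : ℝ) : Fin 3 → ℝ :=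
  ![ (1 / Real.sqrt (3 * (p - 1))) * (Real.sqrt (p ^ 2 - p + 1) * coth (a * ξ) + 1) *
       Real.exp (-ξ / (2 * Real.sqrt (p - 1)) +
         (2 * p - 1) * y / (2 * Real.sqrt (3 * (p - 1)))),
     (1 / Real.sqrt (3 * (p - 1))) * (Real.sqrt (p ^ 2 - p + 1) * coth (a * ξ) + (p - 1)) *
       Real.exp (-(Real.sqrt (p - 1) / 2) * ξ -
         (p + 1) * y / (2 * Real.sqrt (3 * (p - 1)))),
     -(1 / (Real.sqrt 3 * p)) * (Real.sqrt (p ^ 2 - p + 1) * coth (a * ξ) - p) *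
       Real.exp ((p / (2 * Real.sqrt (p - 1))) * ξ -
         (p - 2) * y / (2 * Real.sqrt (3 * (p - 1)))) ]

/-- Each component satisfies the affine-sphere equation
`Δ r = ((p²−p+1)/(2(p−1))) (coth²(a ξ) − 1/3) r`. -/
theorem case5_affine_sphere_laplace (p : ℝ) (hp : 2 ≤ p)
    (a : ℝ) (ha : a = Real.sqrt (p ^ 2 - p + 1) / (2 * Real.sqrt (p - 1))) :
    ∀ ξ : ℝ, ξ ≠ 0 → ∀ y : ℝ, ∀ i : Fin 3,
      deriv (deriv fun s => r p a s y i) ξ + deriv (deriv fun s => r p a ξ s i) y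
        = ((p ^ 2 - p + 1) / (2 * (p - 1))) * ((coth (a * ξ)) ^ 2 - 1 / 3) * r p a ξ y i := by
  have hp1 : (0:ℝ) < p - 1 := by linarith
  have hq1 : (0:ℝ) < p ^ 2 - p + 1 := by nlinarith
  have h31 : (0:ℝ) < 3 * (p - 1) := by linarith
  have hsp : 0 < Real.sqrt (p - 1) := Real.sqrt_pos.mpr hp1
  have hsq : 0 < Real.sqrt (p ^ 2 - p + 1) := Real.sqrt_pos.mpr hq1
  have hs3p : 0 < Real.sqrt (3 * (p - 1)) := Real.sqrt_pos.mpr h31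
  have hsp2 : Real.sqrt (p - 1) ^ 2 = p - 1 := Real.sq_sqrt hp1.le
  have hsq2 : Real.sqrt (p ^ 2 - p + 1) ^ 2 = p ^ 2 - p + 1 := Real.sq_sqrt hq1.le
  have h3 : Real.sqrt 3 ^ 2 = (3:ℝ) := Real.sq_sqrt (by norm_num)
  have ha0 : a ≠ 0 := by rw [ha]; positivity
  have hlam : (p ^ 2 - p + 1) / (2 * (p - 1)) = 2 * a ^ 2 := by
    rw [ha, div_pow, mul_pow, hsq2, hsp2]
    field_simp
  intro ξ hξ y i
  have main : ∀ C K b α β : ℝ, K * α = -(a * b) → α ^ 2 + β ^ 2 = 4 * a ^ 2 / 3 →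
      deriv (deriv fun s => C * (K * coth (a * s) + b) * Real.exp (α * s + β * y)) ξ
        + deriv (deriv fun s => C * (K * coth (a * ξ) + b) * Real.exp (α * ξ + β * s)) y
      = ((p ^ 2 - p + 1) / (2 * (p - 1))) * ((coth (a * ξ)) ^ 2 - 1 / 3)
          * (C * (K * coth (a * ξ) + b) * Real.exp (α * ξ + β * y)) := by
    intro C K b α β h1 h2
    rw [hlam]
    exact key a C K b α β ha0 h1 h2 ξ hξ y
  fin_cases i
  · -- component 1
    simp only [r, Matrix.cons_val_zero]
    have harg : ∀ s t : ℝ, -s / (2 * Real.sqrt (p - 1))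
        + (2 * p - 1) * t / (2 * Real.sqrt (3 * (p - 1)))
        = (-(1 / (2 * Real.sqrt (p - 1)))) * s
          + ((2 * p - 1) / (2 * Real.sqrt (3 * (p - 1)))) * t := by
      intro s t; ring
    simp only [harg]
    exact main (1 / Real.sqrt (3 * (p - 1))) (Real.sqrt (p ^ 2 - p + 1)) 1
      (-(1 / (2 * Real.sqrt (p - 1)))) ((2 * p - 1) / (2 * Real.sqrt (3 * (p - 1))))
      (by rw [ha]; field_simp)
      (by rw [ha]
          field_simp
          have hQ : Real.sqrt ((p - 1) * 3) ^ 2 = (p - 1) * 3 := Real.sq_sqrt (by linarith)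
          have hR : Real.sqrt (p * (p - 1) + 1) ^ 2 = p * (p - 1) + 1 := Real.sq_sqrt (by nlinarith)
          have hs4 : Real.sqrt (p - 1) ^ 4 = (p - 1) ^ 2 := by
            linear_combination (Real.sqrt (p - 1) ^ 2 + (p - 1)) * hsp2
          have hs6 : Real.sqrt (p - 1) ^ 6 = (p - 1) ^ 3 := by
            linear_combination (Real.sqrt (p - 1) ^ 4 + Real.sqrt (p - 1) ^ 2 * (p - 1) + (p - 1) ^ 2) * hsp2
          simp only [hQ, hR, h3, hs4, hs6, hsp2, hsq2]
          ring)
  · -- component 2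
    simp only [r, Matrix.cons_val_one, Matrix.head_cons]
    have harg : ∀ s t : ℝ, -(Real.sqrt (p - 1) / 2) * s
        - (p + 1) * t / (2 * Real.sqrt (3 * (p - 1)))
        = (-(Real.sqrt (p - 1) / 2)) * s
          + (-((p + 1) / (2 * Real.sqrt (3 * (p - 1))))) * t := by
      intro s t; ring
    simp only [harg]
    exact main (1 / Real.sqrt (3 * (p - 1))) (Real.sqrt (p ^ 2 - p + 1)) (p - 1)
      (-(Real.sqrt (p - 1) / 2)) (-((p + 1) / (2 * Real.sqrt (3 * (p - 1)))))
      (by rw [ha]; field_simp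
          linear_combination (-1) * hsp2)
      (by rw [ha]
          field_simp
          have hQ : Real.sqrt ((p - 1) * 3) ^ 2 = (p - 1) * 3 := Real.sq_sqrt (by linarith)
          have hR : Real.sqrt (p * (p - 1) + 1) ^ 2 = p * (p - 1) + 1 := Real.sq_sqrt (by nlinarith)
          have hs4 : Real.sqrt (p - 1) ^ 4 = (p - 1) ^ 2 := by
            linear_combination (Real.sqrt (p - 1) ^ 2 + (p - 1)) * hsp2
          have hs6 : Real.sqrt (p - 1) ^ 6 = (p - 1) ^ 3 := by
            linear_combination (Real.sqrt (p - 1) ^ 4 + Real.sqrt (p - 1) ^ 2 * (p - 1) + (p - 1) ^ 2) * hsp2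
          simp only [hQ, hR, h3, hs4, hs6, hsp2, hsq2]
          ring)
  · -- component 3
    simp only [r, Matrix.cons_val_two, Matrix.tail_cons, Matrix.head_cons]
    have hsub : ∀ x : ℝ, Real.sqrt (p ^ 2 - p + 1) * x - p
        = Real.sqrt (p ^ 2 - p + 1) * x + (-p) := by intro x; ring
    have harg : ∀ s t : ℝ, (p / (2 * Real.sqrt (p - 1))) * s
        - (p - 2) * t / (2 * Real.sqrt (3 * (p - 1)))
        = (p / (2 * Real.sqrt (p - 1))) * s
          + (-((p - 2) / (2 * Real.sqrt (3 * (p - 1))))) * t := by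
      intro s t; ring
    simp only [hsub, harg]
    exact main (-(1 / (Real.sqrt 3 * p))) (Real.sqrt (p ^ 2 - p + 1)) (-p)
      (p / (2 * Real.sqrt (p - 1))) (-((p - 2) / (2 * Real.sqrt (3 * (p - 1)))))
      (by rw [ha]; field_simp)
      (by rw [ha]
          field_simp
          have hQ : Real.sqrt ((p - 1) * 3) ^ 2 = (p - 1) * 3 := Real.sq_sqrt (by linarith)
          have hR : Real.sqrt (p * (p - 1) + 1) ^ 2 = p * (p - 1) + 1 := Real.sq_sqrt (by nlinarith)
          have hs4 : Real.sqrt (p - 1) ^ 4 = (p - 1) ^ 2 := by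
            linear_combination (Real.sqrt (p - 1) ^ 2 + (p - 1)) * hsp2
          have hs6 : Real.sqrt (p - 1) ^ 6 = (p - 1) ^ 3 := by
            linear_combination (Real.sqrt (p - 1) ^ 4 + Real.sqrt (p - 1) ^ 2 * (p - 1) + (p - 1) ^ 2) * hsp2
          simp only [hQ, hR, h3, hs4, hs6, hsp2, hsq2]
          ring)
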